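/- Let A be a unital C*-algebra, n ≥ 1, and let (q_{ij})_{i,j∈{1,…,n}} be a magic unitary in A whose entries are self-adjoint projections. Let d : {1,…,n} × {1,…,n} → ℝ be any function. Then the following two conditions are equivalent: (a) for all k, l: Σ_i d(i,l)·q_{ki} = Σ_i d(k,i)·q_{il}; (b) for all k, l: d(k,l)·1 = Σ_{i,j} d(i,j)·q_{ki}·q_{lj}. -/

import Mathlib

/-- Projections summing to 1 in a C*-algebra are mutually orthogonal. -/
lemma proj_sum_one_orth {A : Type*} [CStarAlgebra A] {n : ℕ}
    (p : Fin n → A) (hsa : ∀ i, IsSelfAdjoint (p i)) (hid : ∀ i, IsIdempotentElem (p i))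
    (hsum : ∑ i, p i = 1) {i j : Fin n} (hij : i ≠ j) : p i * p j = 0 := by
  letI := CStarAlgebra.spectralOrder A
  haveI := CStarAlgebra.spectralOrderedRing A
  have hform : ∀ k, star (p k * p i) * (p k * p i) = p i * p k * p i := by
    intro k
    rw [star_mul, (hsa k).star_eq, (hsa i).star_eq, mul_assoc, ← mul_assoc (p k),
      (hid k).eq, ← mul_assoc]
  have h1 : ∑ k, p i * p k * p i = p i := by
    have : ∑ k, p i * p k * p i = p i * (∑ k, p k) * p i := by
      rw [Finset.mul_sum, Finset.sum_mul]
    rw [this, hsum, mul_one, (hid i).eq]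
  have hiii : p i * p i * p i = p i := by rw [(hid i).eq, (hid i).eq]
  have h3 := Finset.add_sum_erase Finset.univ (fun k => p i * p k * p i) (Finset.mem_univ i)
  rw [h1, hiii] at h3
  have h2 : ∑ k ∈ Finset.univ.erase i, p i * p k * p i = 0 := add_eq_left.mp h3
  have hnonneg : ∀ k ∈ Finset.univ.erase i, 0 ≤ p i * p k * p i := by
    intro k _
    rw [← hform k]
    exact star_mul_self_nonneg _
  have hterm : p i * p j * p i = 0 :=
    (Finset.sum_eq_zero_iff_of_nonneg hnonneg).mp h2 j
      (Finset.mem_erase.mpr ⟨hij.symm, Finset.mem_univ j⟩)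
  have hji : p j * p i = 0 := by
    rw [← hform j] at hterm
    exact (CStarRing.star_mul_self_eq_zero_iff _).mp hterm
  calc p i * p j = star (p j * p i) := by
        rw [star_mul, (hsa j).star_eq, (hsa i).star_eq]
    _ = 0 := by rw [hji, star_zero]

/-- Banica's commutation relation for a quantum isometric action on a finite metric space is
equivalent to the invariance `α⁽²⁾(d) = d ⊗ 1`: for a magic unitary `(q_{ij})` of self-adjoint
projections and any function `d`, one has
`∀ k l, Σ_i d(i,l)·q_{ki} = Σ_i d(k,i)·q_{il}` iff
`∀ k l, d(k,l)·1 = Σ_{i,j} d(i,j)·q_{ki}·q_{lj}`. -/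
theorem banica_isometry_condition_equivalence
    {A : Type*} [CStarAlgebra A] {n : ℕ} (hn : 1 ≤ n)
    (q : Fin n → Fin n → A)
    (hq_sa : ∀ i j, IsSelfAdjoint (q i j))
    (hq_idem : ∀ i j, IsIdempotentElem (q i j))
    (hq_row : ∀ i, ∑ j, q i j = 1)
    (hq_col : ∀ j, ∑ i, q i j = 1)
    (d : Fin n → Fin n → ℝ) :
    (∀ k l, ∑ i, d i l • q k i = ∑ i, d k i • q i l) ↔
    (∀ k l, d k l • (1 : A) = ∑ i, ∑ j, d i j • (q k i * q l j)) := by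
  -- orthogonality within a row
  have horow : ∀ k {i j : Fin n}, i ≠ j → q k i * q k j = 0 := fun k i j hij =>
    proj_sum_one_orth (q k) (hq_sa k) (hq_idem k) (hq_row k) hij
  -- orthogonality within a column
  have hocol : ∀ j {i l : Fin n}, i ≠ l → q i j * q l j = 0 := fun j i l hil =>
    proj_sum_one_orth (fun r => q r j) (fun r => hq_sa r j) (fun r => hq_idem r j)
      (hq_col j) hil
  constructor
  · intro ha k l
    have hcolsum : ∀ i, (∑ j, q i j * q l j) = if i = l then (1:A) else 0 := by
      intro i
      by_cases h : i = l
      · subst h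
        rw [if_pos rfl]
        calc ∑ j, q i j * q i j = ∑ j, q i j :=
              Finset.sum_congr rfl (fun j _ => (hq_idem i j).eq)
          _ = 1 := hq_row i
      · rw [if_neg h]
        exact Finset.sum_eq_zero (fun j _ => hocol j h)
    refine Eq.symm ?_
    calc ∑ i, ∑ j, d i j • (q k i * q l j)
        = ∑ j, ∑ i, d i j • (q k i * q l j) := Finset.sum_comm
      _ = ∑ j, (∑ i, d i j • q k i) * q l j := by
          simp only [Finset.sum_mul, smul_mul_assoc]
      _ = ∑ j, (∑ i, d k i • q i j) * q l j :=
          Finset.sum_congr rfl (fun j _ => by rw [ha k j])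
      _ = ∑ j, ∑ i, d k i • (q i j * q l j) := by
          simp only [Finset.sum_mul, smul_mul_assoc]
      _ = ∑ i, ∑ j, d k i • (q i j * q l j) := Finset.sum_comm
      _ = ∑ i, d k i • (∑ j, q i j * q l j) := by
          simp only [Finset.smul_sum]
      _ = ∑ i, d k i • (if i = l then (1:A) else 0) :=
          Finset.sum_congr rfl (fun i _ => by rw [hcolsum i])
      _ = d k l • (1:A) := by
          rw [Finset.sum_eq_single l (fun i _ hi => by rw [if_neg hi, smul_zero]) (by simp),
            if_pos rfl]
  · intro hb k l
    have key : ∀ m, d k m • q m l = ∑ i, d i l • (q k i * q m l) := by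
      intro m
      have h := congrArg (· * q m l) (hb k m)
      simp only [smul_mul_assoc, one_mul, Finset.sum_mul] at h
      rw [h]
      refine Finset.sum_congr rfl (fun i _ => ?_)
      rw [Finset.sum_eq_single l]
      · rw [mul_assoc, (hq_idem m l).eq]
      · intro j _ hj
        rw [mul_assoc, horow m hj, mul_zero, smul_zero]
      · simp
    calc ∑ i, d i l • q k i
        = ∑ i, d i l • (q k i * ∑ m, q m l) := by
          rw [hq_col l]
          simp only [mul_one]
      _ = ∑ i, ∑ m, d i l • (q k i * q m l) := by
          simp only [Finset.mul_sum, Finset.smul_sum]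
      _ = ∑ m, ∑ i, d i l • (q k i * q m l) := Finset.sum_comm
      _ = ∑ m, d k m • q m l := Finset.sum_congr rfl (fun m _ => (key m).symm)
      _ = ∑ i, d k i • q i l := rfl
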